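/- For all integers 0 ≤ m ≤ N and all x ∈ (−1,1), the normalized Legendre function satisfies the associated Legendre differential equation (1−x²)·(P^m_N)''(x) − 2x·(P^m_N)'(x) + ((N+1/2)² − 1/4 − m²/(1−x²))·P^m_N(x) = 0. -/

import Mathlib

open Real Filter MeasureTheory intervalIntegral

section FerrersAux
open Polynomial

theorem iteratedDeriv_eval (p : ℝ[X]) (n : ℕ) :
    iteratedDeriv n (fun y : ℝ => p.eval y) = fun y => (derivative^[n] p).eval y := by
  induction n with
  | zero => simp
  | succ k ih =>
    rw [iteratedDeriv_succ, ih, Function.iterate_succ_apply']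
    funext y
    exact Polynomial.deriv (p := derivative^[k] p)

theorem poly0 (N : ℕ) :
    ((X:ℝ[X])^2 - 1) * derivative (((X:ℝ[X])^2 - 1)^N) = C (2*(N:ℝ)) * X * ((X:ℝ[X])^2-1)^N := by
  cases N with
  | zero => simp
  | succ n =>
    rw [derivative_pow]
    simp only [derivative_sub, derivative_one, derivative_pow, derivative_X, Nat.add_sub_cancel]
    push_cast
    rw [C_mul, pow_succ ((X:ℝ[X])^2-1) n]
    ring

theorem derivX21 : derivative ((X:ℝ[X])^2 - 1) = C 2 * X := by
  simp [derivative_sub, derivative_X_pow]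
  rw [map_ofNat C 2]; norm_num

theorem polyS (N k : ℕ) :
    ((X:ℝ[X])^2 - 1) * derivative (derivative (derivative^[k] (((X:ℝ[X])^2-1)^N)))
      = C (2*(N:ℝ) - 2*((k:ℝ)+1)) * X * derivative (derivative^[k] (((X:ℝ[X])^2-1)^N))
      + C (((k:ℝ)+1)*(2*(N:ℝ) - (k:ℝ))) * derivative^[k] (((X:ℝ[X])^2-1)^N) := by
  induction k with
  | zero =>
    have h := congrArg derivative (poly0 N)
    simp only [derivative_mul, derivative_C, derivative_X, derivX21] at h
    simp only [Function.iterate_zero_apply, Nat.cast_zero]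
    norm_num
    simp only [map_sub, map_add, map_mul, map_one, map_ofNat, C_eq_natCast] at h ⊢
    linear_combination h
  | succ k ih =>
    have h := congrArg derivative ih
    simp only [derivative_add, derivative_mul, derivative_C, derivative_X, derivX21] at h
    simp only [Function.iterate_succ_apply']
    push_cast
    simp only [map_sub, map_add, map_mul, map_one, map_ofNat, C_eq_natCast] at h ⊢
    linear_combination h


/-- The Legendre polynomial `P̃_N(x) = (1/(2^N N!)) · d^N/dx^N[(x²−1)^N]`. -/
noncomputable def legendreP (N : ℕ) (x : ℝ) : ℝ :=
  (1 / (2 ^ N * (Nat.factorial N : ℝ))) * iteratedDeriv N (fun y : ℝ => (y ^ 2 - 1) ^ N) x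

/-- The normalized Legendre (Ferrers) function
`P^m_N(x) = ((N+1/2)·(N−m)!/(N+m)!)^{1/2} · (1/(2^N N!)) · (1−x²)^{m/2} ·
  d^{N+m}/dx^{N+m}[(x²−1)^N]`. -/
noncomputable def ferrersP (m N : ℕ) (x : ℝ) : ℝ :=
  Real.sqrt ((((N : ℝ) + 1 / 2) * (Nat.factorial (N - m) : ℝ)) / (Nat.factorial (N + m) : ℝ)) *
    (1 / (2 ^ N * (Nat.factorial N : ℝ))) * (1 - x ^ 2) ^ ((m : ℝ) / 2) *
    iteratedDeriv (N + m) (fun y : ℝ => (y ^ 2 - 1) ^ N) x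

/-- The Bessel function of order zero, `J₀(z) = (1/(2π)) ∫_{−π}^{π} exp(−i z sin θ) dθ`. -/
noncomputable def besselJ₀ (z : ℝ) : ℂ :=
  (1 / (2 * (π : ℂ))) * ∫ θ in (-π)..π, Complex.exp (-Complex.I * z * Real.sin θ)

/-- The Airy function, `Ai(x) = lim_{R→∞} (1/π) ∫_0^R cos(t³/3 + x·t) dt`. -/
noncomputable def airyAi (x : ℝ) : ℝ :=
  limUnder Filter.atTop
    (fun R : ℝ => (1 / π) * ∫ t in (0 : ℝ)..R, Real.cos (t ^ 3 / 3 + x * t))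

/-- the normalized Legendre functions satisfy the associated Legendre ODE. -/
theorem ferrers_ode (m N : ℕ) (hmN : m ≤ N) (x : ℝ) (hx : x ∈ Set.Ioo (-1 : ℝ) 1) :
    (1 - x ^ 2) * deriv (deriv (ferrersP m N)) x - 2 * x * deriv (ferrersP m N) x +
      ((((N : ℝ) + 1 / 2) ^ 2 - 1 / 4 - (m : ℝ) ^ 2 / (1 - x ^ 2)) * ferrersP m N x) = 0 := by
  have hs : (0:ℝ) < 1 - x^2 := by nlinarith [hx.1, hx.2]
  set P : ℝ[X] := ((Polynomial.X:ℝ[X])^2 - 1)^N with hP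
  set q : ℝ[X] := Polynomial.derivative^[N+m] P with hq
  set a : ℝ := (m:ℝ)/2 with ha
  set c : ℝ := Real.sqrt ((((N : ℝ) + 1 / 2) * (Nat.factorial (N - m) : ℝ)) / (Nat.factorial (N + m) : ℝ)) *
    (1 / (2 ^ N * (Nat.factorial N : ℝ))) with hc
  have hpe : (fun y : ℝ => (y^2-1)^N) = fun y => P.eval y := by
    funext y; simp [hP]
  have hiter : iteratedDeriv (N+m) (fun y : ℝ => (y^2-1)^N) = fun y => q.eval y := by
    rw [hpe, iteratedDeriv_eval]
  have hfer : ferrersP m N = fun y => c * ((1 - y^2) ^ a * q.eval y) := by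
    funext y
    rw [ferrersP]
    rw [show (fun y : ℝ => (y ^ 2 - 1) ^ N) = (fun y : ℝ => (y^2-1)^N) from rfl, hiter]
    ring
  set D1 : ℝ → ℝ := fun y => c * ((-(2*y) * a * (1 - y^2) ^ (a-1)) * q.eval y
      + (1 - y^2) ^ a * (Polynomial.derivative q).eval y) with hD1def
  have hder1 : ∀ y ∈ Set.Ioo (-1:ℝ) 1, HasDerivAt (ferrersP m N) (D1 y) y := by
    intro y hy
    have hsy : (0:ℝ) < 1 - y^2 := by nlinarith [hy.1, hy.2]
    have h1 : HasDerivAt (fun z : ℝ => 1 - z^2) (-(2*y)) y := by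
      simpa using (hasDerivAt_pow 2 y).const_sub 1
    have h2 : HasDerivAt (fun z : ℝ => (1 - z^2) ^ a) (-(2*y) * a * (1-y^2)^(a-1)) y :=
      h1.rpow_const (Or.inl hsy.ne')
    have h3 := (h2.mul (q.hasDerivAt y)).const_mul c
    rw [hfer]
    exact h3
  have hEq : deriv (ferrersP m N) =ᶠ[nhds x] D1 :=
    Filter.eventuallyEq_of_mem (isOpen_Ioo.mem_nhds hx) (fun y hy => (hder1 y hy).deriv)
  -- second derivative pieces at x
  have h1 : HasDerivAt (fun z : ℝ => 1 - z^2) (-(2*x)) x := by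
    simpa using (hasDerivAt_pow 2 x).const_sub 1
  have h2 : HasDerivAt (fun z : ℝ => (1 - z^2) ^ a) (-(2*x) * a * (1-x^2)^(a-1)) x :=
    h1.rpow_const (Or.inl hs.ne')
  have h2' : HasDerivAt (fun z : ℝ => (1 - z^2) ^ (a-1)) (-(2*x) * (a-1) * (1-x^2)^(a-1-1)) x :=
    h1.rpow_const (Or.inl hs.ne')
  have hneg : HasDerivAt (fun z : ℝ => -(2*z)) (-2 : ℝ) x := by
    simpa using ((hasDerivAt_id x).const_mul (2:ℝ)).fun_neg
  have hL : HasDerivAt (fun z : ℝ => -(2*z) * a) (-2 * a) x := hneg.mul_const a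
  have hB := hL.mul h2'
  have hCp := hB.mul (q.hasDerivAt x)
  have hDp := h2.mul ((Polynomial.derivative q).hasDerivAt x)
  have hFull := (hCp.add hDp).const_mul c
  have hderiv2 : deriv (deriv (ferrersP m N)) x
      = c * (((-2 * a * (1 - x^2)^(a-1) + -(2*x) * a * (-(2*x) * (a-1) * (1-x^2)^(a-1-1))) * q.eval x
            + (-(2*x) * a * (1-x^2)^(a-1)) * (Polynomial.derivative q).eval x)
          + ((-(2*x) * a * (1-x^2)^(a-1)) * (Polynomial.derivative q).eval x
            + (1-x^2)^a * (Polynomial.derivative (Polynomial.derivative q)).eval x)) := by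
    rw [hEq.deriv_eq]
    exact hFull.deriv
  have hderiv1 : deriv (ferrersP m N) x = D1 x := (hder1 x hx).deriv
  have hkey := congrArg (Polynomial.eval x) (polyS N (N+m))
  simp only [Polynomial.eval_mul, Polynomial.eval_add, Polynomial.eval_sub, Polynomial.eval_pow,
    Polynomial.eval_one, Polynomial.eval_C, Polynomial.eval_X] at hkey
  push_cast at hkey
  have hx2ne : x^2 - 1 ≠ 0 := by nlinarith
  have hu2 : (Polynomial.derivative (Polynomial.derivative q)).eval x
      = ((2*(N:ℝ) - 2*(((N:ℝ)+(m:ℝ))+1)) * x * (Polynomial.derivative q).eval x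
        + ((((N:ℝ)+(m:ℝ))+1)*(2*(N:ℝ) - ((N:ℝ)+(m:ℝ)))) * q.eval x) / (x^2-1) := by
    field_simp
    linear_combination hkey
  have e2 : (1-x^2) ^ a = (1-x^2)^(a-1) * (1-x^2) := by
    rw [← Real.rpow_add_one hs.ne' (a-1)]
    congr 1
    ring
  have e1 : (1-x^2) ^ (a-1) = (1-x^2)^(a-1-1) * (1-x^2) := by
    rw [← Real.rpow_add_one hs.ne' (a-1-1)]
    congr 1
    ring
  rw [hderiv2, hderiv1, show ferrersP m N x = c * ((1 - x^2) ^ a * q.eval x) from congrFun hfer x]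
  simp only [hD1def]
  rw [hu2, e2, e1]
  field_simp
  ring

end FerrersAux
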